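/- arXiv:2006.03551 — 3 statements merged into one kernel-verified Lean document; each statement's English description precedes it below -/
import Mathlib

section
/- Let P be a Poisson algebra over a field 𝔽 and let I be a Poisson ideal of P. Then for all x, y ∈ I and every positive integer m, {x,y}²·γₘ(I) ⊆ γ_{m+1}(I)·P, i.e. {x,y}²·z ∈ γ_{m+1}(I)·P for every z ∈ γₘ(I). -/
/-- A Poisson bracket on a commutative associative unital `F`-algebra `P`:
an `F`-bilinear, alternating bracket satisfying the Jacobi identity and the
Leibniz rule `{a·b, c} = a·{b,c} + b·{a,c}`. -/
structure PoissonBracket (F P : Type*) [Field F] [CommRing P] [Algebra F P] where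
  bracket : P → P → P
  add_left : ∀ a b c : P, bracket (a + b) c = bracket a c + bracket b c
  smul_left : ∀ (r : F) (a b : P), bracket (r • a) b = r • bracket a b
  add_right : ∀ a b c : P, bracket a (b + c) = bracket a b + bracket a c
  smul_right : ∀ (r : F) (a b : P), bracket a (r • b) = r • bracket a b
  alt : ∀ a : P, bracket a a = 0
  jacobi : ∀ a b c : P,
    bracket (bracket a b) c + bracket (bracket b c) a + bracket (bracket c a) b = 0
  leibniz : ∀ a b c : P, bracket (a * b) c = a * bracket b c + b * bracket a c

namespace PoissonBracket

variable {F P : Type*} [Field F] [CommRing P] [Algebra F P]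

/-- `{A, B}`: the `F`-span of all brackets of elements of `A` with elements of `B`. -/
def lieSpan (pb : PoissonBracket F P) (A B : Submodule F P) : Submodule F P :=
  Submodule.span F {z : P | ∃ a ∈ A, ∃ b ∈ B, z = pb.bracket a b}

/-- Upper derived series: `δ̃₀(P) = P`, `δ̃ₙ₊₁(P) = {δ̃ₙ(P), δ̃ₙ(P)}·P`. -/
def udelta (pb : PoissonBracket F P) : ℕ → Submodule F P
  | 0 => ⊤
  | n + 1 => pb.lieSpan (pb.udelta n) (pb.udelta n) * ⊤

/-- Derived series of a Lie ideal `I`: `δ₀(I) = I`, `δₙ₊₁(I) = {δₙ(I), δₙ(I)}`. -/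
def dseries (pb : PoissonBracket F P) (I : Submodule F P) : ℕ → Submodule F P
  | 0 => I
  | n + 1 => pb.lieSpan (pb.dseries I n) (pb.dseries I n)

/-- Lower central series of a Lie ideal `I`, indexed so that `lcs I 1 = γ₁(I) = I`
and `lcs I (n+1) = γₙ₊₁(I) = {γₙ(I), I}` for `n ≥ 1` (index `0` is a dummy equal to `I`). -/
def lcs (pb : PoissonBracket F P) (I : Submodule F P) : ℕ → Submodule F P
  | 0 => I
  | 1 => I
  | n + 2 => pb.lieSpan (pb.lcs I (n + 1)) I

/-- Upper Lie power series: `P⁽¹⁾ = P`, `P⁽ⁿ⁾ = {P⁽ⁿ⁻¹⁾, P}·P` for `n > 1`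
(index `0` is a dummy equal to `P`). -/
def ulps (pb : PoissonBracket F P) : ℕ → Submodule F P
  | 0 => ⊤
  | 1 => ⊤
  | n + 2 => pb.lieSpan (pb.ulps (n + 1)) ⊤ * ⊤

/-- A Poisson ideal: an ideal for the associative product which is also a Lie ideal. -/
def IsPoissonIdeal (pb : PoissonBracket F P) (I : Submodule F P) : Prop :=
  (∀ x ∈ I, ∀ p : P, p * x ∈ I) ∧ (∀ x ∈ I, ∀ p : P, pb.bracket x p ∈ I)

/-- The Poisson ideal generated by a set `S`: the smallest Poisson ideal containing `S`. -/
def poissonSpan (pb : PoissonBracket F P) (S : Set P) : Submodule F P :=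
  sInf {I : Submodule F P | pb.IsPoissonIdeal I ∧ S ⊆ I}

end PoissonBracket

open PoissonBracket

namespace PoissonBracket

variable {F P : Type*} [Field F] [CommRing P] [Algebra F P]

lemma bracket_antisymm (pb : PoissonBracket F P) (a b : P) :
    pb.bracket a b = - pb.bracket b a := by
  have h := pb.alt (a + b)
  rw [pb.add_left, pb.add_right, pb.add_right, pb.alt, pb.alt] at h
  linear_combination h

lemma bracket_mul_right (pb : PoissonBracket F P) (a b c : P) :
    pb.bracket a (b * c) = b * pb.bracket a c + c * pb.bracket a b := by
  have h1 := pb.leibniz b c a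
  have h2 := pb.bracket_antisymm a (b * c)
  have h3 := pb.bracket_antisymm c a
  have h4 := pb.bracket_antisymm b a
  linear_combination h2 - h1 - b * h3 - c * h4

/-- The key identity: `{x,y}²{z,v}` as a combination of terms each containing a
double bracket whose inner entries are `z` paired with an element of the ideal. -/
lemma key_identity (pb : PoissonBracket F P) (x y z v : P) :
    pb.bracket x y ^ 2 * pb.bracket z v =
      - (pb.bracket x y * pb.bracket (pb.bracket z (y * v)) x)
      + pb.bracket x y * y * pb.bracket (pb.bracket z v) x
      + pb.bracket x y * v * pb.bracket (pb.bracket z y) x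
      + pb.bracket v x * pb.bracket (pb.bracket z (x * y)) y
      - x * pb.bracket v x * pb.bracket (pb.bracket z y) y
      - y * pb.bracket v x * pb.bracket (pb.bracket z x) y := by
  have hyx : pb.bracket y x = - pb.bracket x y := pb.bracket_antisymm y x
  have hyy : pb.bracket y y = 0 := pb.alt y
  rw [pb.bracket_mul_right z y v, pb.bracket_mul_right z x y, pb.add_left, pb.add_left,
    pb.leibniz, pb.leibniz, pb.leibniz, pb.leibniz, hyy, hyx]
  ring

lemma mem_lieSpan (pb : PoissonBracket F P) (A B : Submodule F P) {a b : P}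
    (ha : a ∈ A) (hb : b ∈ B) : pb.bracket a b ∈ pb.lieSpan A B :=
  Submodule.subset_span ⟨a, ha, b, hb, rfl⟩

lemma mul_mem_mul_top {J : Submodule F P} {s : P} (hs : s ∈ J) (p : P) :
    p * s ∈ J * (⊤ : Submodule F P) := by
  rw [mul_comm p s]
  exact Submodule.mul_mem_mul hs Submodule.mem_top

end PoissonBracket

/-- For a Poisson ideal `I` and `x, y ∈ I`,
`{x,y}²·γₘ(I) ⊆ γ_{m+1}(I)·P` for every positive integer `m`. -/
theorem bracket_sq_mul_lcs_mem
    {F P : Type*} [Field F] [CommRing P] [Algebra F P]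
    (pb : PoissonBracket F P) (I : Submodule F P) (hI : pb.IsPoissonIdeal I)
    (x y : P) (hx : x ∈ I) (hy : y ∈ I)
    (m : ℕ) (hm : 1 ≤ m) :
    ∀ z ∈ pb.lcs I m,
      (pb.bracket x y) ^ 2 * z ∈ pb.lcs I (m + 1) * ⊤ := by
  intro z hz
  have hmul : ∀ {J : Submodule F P} {s : P}, s ∈ J → ∀ p : P,
      p * s ∈ J * (⊤ : Submodule F P) := fun hs p => PoissonBracket.mul_mem_mul_top hs p
  obtain _ | m := m
  · exact absurd hm (by omega)
  obtain _ | k := m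
  · -- m = 1 : trivial since {x,y} ∈ γ₂(I)
    have hw : pb.bracket x y ∈ pb.lcs I 2 := pb.mem_lieSpan I I hx hy
    have h2 : pb.bracket x y ^ 2 * z = pb.bracket x y * (z * pb.bracket x y) := by ring
    rw [h2]
    exact Submodule.mul_mem_mul hw Submodule.mem_top
  · -- m = k + 2
    have hz' : z ∈ pb.lieSpan (pb.lcs I (k + 1)) I := hz
    clear hz
    induction hz' using Submodule.span_induction with
    | mem t ht =>
      obtain ⟨a, ha, b, hb, rfl⟩ := ht
      have mem2 : ∀ c ∈ I, pb.bracket a c ∈ pb.lcs I (k + 2) :=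
        fun c hc => pb.mem_lieSpan (pb.lcs I (k + 1)) I ha hc
      have mem3 : ∀ c ∈ pb.lcs I (k + 2), ∀ d ∈ I,
          pb.bracket c d ∈ pb.lcs I (k + 3) :=
        fun c hc d hd => pb.mem_lieSpan (pb.lcs I (k + 2)) I hc hd
      have hT1 : pb.bracket (pb.bracket a (y * b)) x ∈ pb.lcs I (k + 3) :=
        mem3 _ (mem2 _ (hI.1 b hb y)) _ hx
      have hS1 : pb.bracket (pb.bracket a b) x ∈ pb.lcs I (k + 3) := mem3 _ (mem2 _ hb) _ hx
      have hS2 : pb.bracket (pb.bracket a y) x ∈ pb.lcs I (k + 3) := mem3 _ (mem2 _ hy) _ hx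
      have hT2 : pb.bracket (pb.bracket a (x * y)) y ∈ pb.lcs I (k + 3) :=
        mem3 _ (mem2 _ (hI.1 y hy x)) _ hy
      have hS3 : pb.bracket (pb.bracket a y) y ∈ pb.lcs I (k + 3) := mem3 _ (mem2 _ hy) _ hy
      have hS4 : pb.bracket (pb.bracket a x) y ∈ pb.lcs I (k + 3) := mem3 _ (mem2 _ hx) _ hy
      have hgoal : pb.lcs I (k + 1 + 1 + 1) = pb.lcs I (k + 3) := by norm_num
      rw [pb.key_identity x y a b, hgoal]
      exact Submodule.sub_mem _ (Submodule.sub_mem _ (Submodule.add_mem _ (Submodule.add_mem _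
        (Submodule.add_mem _ (Submodule.neg_mem _ (hmul hT1 _)) (hmul hS1 _)) (hmul hS2 _))
        (hmul hT2 _)) (hmul hS3 _)) (hmul hS4 _)
    | zero =>
      rw [mul_zero]; exact Submodule.zero_mem _
    | add s t _ _ h1 h2 =>
      rw [mul_add]; exact Submodule.add_mem _ h1 h2
    | smul r t _ h =>
      rw [mul_smul_comm]; exact Submodule.smul_mem _ r h
end

section
/- Let P be a Poisson algebra over a field 𝔽 of characteristic p ≠ 2 (including p = 0). If P is solvable as a Lie algebra, then the Poisson ideal {P,P}·P is nil, i.e. every element of {P,P}·P is nilpotent. -/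
open PoissonBracket

namespace PoissonBracket

variable {F P : Type*} [Field F] [CommRing P] [Algebra F P]
variable (pb : PoissonBracket F P)

lemma bracket_zero_left (b : P) : pb.bracket 0 b = 0 := by
  simpa using pb.smul_left 0 0 b

lemma bracket_zero_right (a : P) : pb.bracket a 0 = 0 := by
  simpa using pb.smul_right 0 a 0

lemma bracket_anti (x y : P) : pb.bracket x y = - pb.bracket y x := by
  have a1 := pb.alt (x + y)
  have e1 := pb.add_left x y (x + y)
  have e2 := pb.add_right x x y
  have e3 := pb.add_right y x y
  have a2 := pb.alt x
  have a3 := pb.alt y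
  linear_combination a1 - e1 - e2 - e3 - a2 - a3

lemma bracket_neg_left (x y : P) : pb.bracket (-x) y = - pb.bracket x y := by
  have := pb.smul_left (-1) x y
  simpa using this

lemma bracket_neg_right (x y : P) : pb.bracket x (-y) = - pb.bracket x y := by
  have := pb.smul_right (-1) x y
  simpa using this

lemma bracket_sub_right (a x y : P) :
    pb.bracket a (x - y) = pb.bracket a x - pb.bracket a y := by
  rw [sub_eq_add_neg, pb.add_right, pb.bracket_neg_right, sub_eq_add_neg]

lemma bracket_sub_left (x y a : P) :
    pb.bracket (x - y) a = pb.bracket x a - pb.bracket y a := by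
  rw [sub_eq_add_neg, pb.add_left, pb.bracket_neg_left, sub_eq_add_neg]

lemma leibniz_right (a s t : P) :
    pb.bracket a (s * t) = s * pb.bracket a t + t * pb.bracket a s := by
  have h1 := pb.bracket_anti a (s * t)
  have h2 := pb.leibniz s t a
  have h3 := pb.bracket_anti a t
  have h4 := pb.bracket_anti a s
  linear_combination h1 - h2 - s * h3 - t * h4

lemma mem_lieSpan_of {A B : Submodule F P} {a b : P} (ha : a ∈ A) (hb : b ∈ B) :
    pb.bracket a b ∈ pb.lieSpan A B :=
  Submodule.subset_span ⟨a, ha, b, hb, rfl⟩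

/-- If `A` is a Lie ideal then so is `{A,A}`. -/
lemma lieSpan_ideal {A : Submodule F P} (hA : ∀ x ∈ A, ∀ y : P, pb.bracket x y ∈ A) :
    ∀ x ∈ pb.lieSpan A A, ∀ y : P, pb.bracket x y ∈ pb.lieSpan A A := by
  intro x hx y
  induction hx using Submodule.span_induction with
  | mem z hz =>
      obtain ⟨a, ha, b, hb, rfl⟩ := hz
      have hj := pb.jacobi a b y
      have h3 : pb.bracket (pb.bracket y a) b = - pb.bracket (pb.bracket a y) b := by
        rw [pb.bracket_anti y a, pb.bracket_neg_left]
      have : pb.bracket (pb.bracket a b) y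
          = - pb.bracket (pb.bracket b y) a + pb.bracket (pb.bracket a y) b := by
        linear_combination hj - h3
      rw [this]
      exact Submodule.add_mem _
        (Submodule.neg_mem _ (pb.mem_lieSpan_of (hA b hb y) ha))
        (pb.mem_lieSpan_of (hA a ha y) hb)
  | zero => simp [pb.bracket_zero_left]
  | add u v _ _ hu hv =>
      rw [pb.add_left]; exact Submodule.add_mem _ hu hv
  | smul r u _ hu =>
      rw [pb.smul_left]; exact Submodule.smul_mem _ _ hu


lemma half_mem (h2 : (2:F) ≠ 0) (S : Submodule F P) {x : P} (hx : x + x ∈ S) : x ∈ S := by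
  have h := S.smul_mem ((2:F)⁻¹) hx
  rwa [← two_smul F x, smul_smul, inv_mul_cancel₀ h2, one_smul] at h

lemma key (h2 : (2:F) ≠ 0) (B : Submodule F P)
    (hB : ∀ x ∈ B, ∀ y : P, pb.bracket x y ∈ B)
    (hAA : ∀ u ∈ pb.lieSpan B B, ∀ v ∈ pb.lieSpan B B,
      pb.bracket u v ∈ (nilradical P).restrictScalars F) :
    ∀ x ∈ pb.lieSpan B B, x ∈ ((nilradical P).restrictScalars F : Submodule F P) := by
  set A := pb.lieSpan B B with hAdef
  set NS : Submodule F P := (nilradical P).restrictScalars F with hNSdef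
  have hA : ∀ x ∈ A, ∀ y : P, pb.bracket x y ∈ A := pb.lieSpan_ideal hB
  have hNmul : ∀ y x : P, x ∈ NS → y * x ∈ NS := by
    intro y x hx
    rw [hNSdef, Submodule.restrictScalars_mem] at hx ⊢
    exact Ideal.mul_mem_left _ y hx
  have hNmul' : ∀ x y : P, x ∈ NS → x * y ∈ NS := by
    intro x y hx; rw [mul_comm]; exact hNmul y x hx
  have hsq : ∀ x : P, x * x ∈ NS → x ∈ NS := by
    intro x hx
    rw [hNSdef, Submodule.restrictScalars_mem, mem_nilradical] at hx ⊢
    obtain ⟨n, hn⟩ := hx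
    exact ⟨n + n, by rw [pow_add, ← mul_pow, hn]⟩
  -- Step 1: brackets of elements of A with anything are nilpotent
  have F1 : ∀ u ∈ A, ∀ x : P, pb.bracket u x ∈ NS := by
    intro u hu x
    have hxx : pb.bracket u (x * x) = x * pb.bracket u x + x * pb.bracket u x :=
      pb.leibniz_right u x x
    have e1 : pb.bracket u (pb.bracket u (x * x))
        = pb.bracket u (x * pb.bracket u x) + pb.bracket u (x * pb.bracket u x) := by
      rw [hxx, pb.add_right]
    have e3 := pb.leibniz_right u x (pb.bracket u x)
    have hid : pb.bracket u x * pb.bracket u x + pb.bracket u x * pb.bracket u x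
        = pb.bracket u (pb.bracket u (x * x))
          - x * pb.bracket u (pb.bracket u x) - x * pb.bracket u (pb.bracket u x) := by
      linear_combination -e1 - 2 * e3
    have m1 : pb.bracket u (pb.bracket u (x * x)) ∈ NS := hAA u hu _ (hA u hu (x * x))
    have m2 : pb.bracket u (pb.bracket u x) ∈ NS := hAA u hu _ (hA u hu x)
    have hmem : pb.bracket u x * pb.bracket u x + pb.bracket u x * pb.bracket u x ∈ NS := by
      rw [hid]
      exact Submodule.sub_mem _ (Submodule.sub_mem _ m1 (hNmul x _ m2)) (hNmul x _ m2)
    exact hsq _ (half_mem h2 NS hmem)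
  -- Step 2: generators are nilpotent
  have gen : ∀ a ∈ B, ∀ b ∈ B, pb.bracket a b ∈ NS := by
    intro a ha b hb
    set u := pb.bracket a b with hudef
    have hu : u ∈ A := pb.mem_lieSpan_of ha hb
    have hban : pb.bracket b a = -u := by rw [pb.bracket_anti b a]
    -- b * u ∈ B
    have hbuB : b * u ∈ B := by
      have hl := pb.leibniz b b a
      have hsum : b * u + b * u = pb.bracket a (b * b) := by
        rw [pb.bracket_anti a (b * b)]
        linear_combination hl + 2 * b * hban
      exact half_mem h2 B (hsum ▸ hB a ha (b * b))
    have hauA : pb.bracket a u ∈ A := by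
      rw [pb.bracket_anti a u]; exact Submodule.neg_mem _ (hA u hu a)
    have hauN : pb.bracket a u ∈ NS := by
      rw [pb.bracket_anti a u]; exact Submodule.neg_mem _ (F1 u hu a)
    -- (†)
    have dag : ∀ x f : P, u * pb.bracket (pb.bracket a (pb.bracket b x)) f ∈ NS := by
      intro x f
      set m := pb.bracket u x with hmdef
      have hmN : m ∈ NS := F1 u hu x
      have hmA : m ∈ A := hA u hu x
      have hamA : pb.bracket a m ∈ A := by
        rw [pb.bracket_anti a m]; exact Submodule.neg_mem _ (hA m hmA a)
      have hamN : pb.bracket a m ∈ NS := by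
        rw [pb.bracket_anti a m]; exact Submodule.neg_mem _ (F1 m hmA a)
      have A1 := pb.leibniz_right a u (pb.bracket b x)
      have hc2 : u * pb.bracket b x = pb.bracket (b * u) x - b * m := by
        linear_combination -pb.leibniz b u x
      have A2 : pb.bracket a (u * pb.bracket b x)
          = pb.bracket a (pb.bracket (b * u) x - b * m) := by rw [hc2]
      have A3 : pb.bracket a (pb.bracket (b * u) x - b * m)
          = pb.bracket a (pb.bracket (b * u) x)
            - (b * pb.bracket a m + m * pb.bracket a b) := by
        rw [pb.bracket_sub_right, pb.leibniz_right]
      have eqE : u * pb.bracket a (pb.bracket b x)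
          = pb.bracket a (pb.bracket (b * u) x) - b * pb.bracket a m - m * u
            - pb.bracket b x * pb.bracket a u := by
        linear_combination A2 - A1 + A3 - m * hudef
      have E1 := pb.leibniz u (pb.bracket a (pb.bracket b x)) f
      have E2 : pb.bracket (u * pb.bracket a (pb.bracket b x)) f
          = pb.bracket (pb.bracket a (pb.bracket (b * u) x)) f
            - pb.bracket (b * pb.bracket a m) f
            - pb.bracket (m * u) f
            - pb.bracket (pb.bracket b x * pb.bracket a u) f := by
        rw [eqE, pb.bracket_sub_left, pb.bracket_sub_left, pb.bracket_sub_left]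
      have E3 := pb.leibniz b (pb.bracket a m) f
      have E4 := pb.leibniz m u f
      have E5 := pb.leibniz (pb.bracket b x) (pb.bracket a u) f
      have total : u * pb.bracket (pb.bracket a (pb.bracket b x)) f
          = pb.bracket (pb.bracket a (pb.bracket (b * u) x)) f
            - (b * pb.bracket (pb.bracket a m) f + pb.bracket a m * pb.bracket b f)
            - (m * pb.bracket u f + u * pb.bracket m f)
            - (pb.bracket b x * pb.bracket (pb.bracket a u) f
               + pb.bracket a u * pb.bracket (pb.bracket b x) f)
            - pb.bracket a (pb.bracket b x) * pb.bracket u f := by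
        linear_combination E2 - E1 - E3 - E4 - E5
      rw [total]
      have n1 : pb.bracket (pb.bracket a (pb.bracket (b * u) x)) f ∈ NS :=
        F1 _ (pb.mem_lieSpan_of ha (hB _ hbuB x)) f
      refine Submodule.sub_mem _ (Submodule.sub_mem _ (Submodule.sub_mem _
        (Submodule.sub_mem _ n1 ?_) ?_) ?_) ?_
      · exact Submodule.add_mem _ (hNmul b _ (F1 _ hamA f)) (hNmul' _ _ hamN)
      · exact Submodule.add_mem _ (hNmul' m _ hmN) (hNmul u _ (F1 m hmA f))
      · exact Submodule.add_mem _ (hNmul _ _ (F1 _ hauA f)) (hNmul' _ _ hauN)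
      · exact hNmul _ _ (F1 u hu f)
    -- (‡)
    have ddag : ∀ y f : P, u * pb.bracket a (pb.bracket b y) * pb.bracket b f
        + u * u * pb.bracket (pb.bracket b y) f ∈ NS := by
      intro y f
      have hd := dag (b * y) f
      have eq1 : pb.bracket b (b * y) = b * pb.bracket b y := by
        rw [pb.leibniz_right, pb.alt]; ring
      have eq2 : pb.bracket a (b * pb.bracket b y)
          = b * pb.bracket a (pb.bracket b y) + pb.bracket b y * u := by
        rw [pb.leibniz_right]
      have eq3 : pb.bracket (pb.bracket a (pb.bracket b (b * y))) f
          = b * pb.bracket (pb.bracket a (pb.bracket b y)) f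
            + pb.bracket a (pb.bracket b y) * pb.bracket b f
            + (pb.bracket b y * pb.bracket u f
               + u * pb.bracket (pb.bracket b y) f) := by
        rw [eq1, eq2, pb.add_left, pb.leibniz, pb.leibniz]
      have hexp : u * pb.bracket a (pb.bracket b y) * pb.bracket b f
          + u * u * pb.bracket (pb.bracket b y) f
          = u * pb.bracket (pb.bracket a (pb.bracket b (b * y))) f
            - b * (u * pb.bracket (pb.bracket a (pb.bracket b y)) f)
            - u * pb.bracket b y * pb.bracket u f := by
        rw [eq3]; ring
      rw [hexp]
      exact Submodule.sub_mem _ (Submodule.sub_mem _ hd (hNmul b _ (dag y f)))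
        (hNmul _ _ (F1 u hu f))
    -- (‡2)
    have ddag2 : ∀ y : P, u * u * pb.bracket a (pb.bracket b y) ∈ NS := by
      intro y
      have h := ddag y a
      have e2 : pb.bracket (pb.bracket b y) a = - pb.bracket a (pb.bracket b y) :=
        pb.bracket_anti _ _
      have hh : u * pb.bracket a (pb.bracket b y) * pb.bracket b a
          + u * u * pb.bracket (pb.bracket b y) a
          = -((u * u * pb.bracket a (pb.bracket b y))
              + (u * u * pb.bracket a (pb.bracket b y))) := by
        rw [e2, hban]; ring
      rw [hh] at h
      exact half_mem h2 NS (by simpa using Submodule.neg_mem _ h)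
    -- finish
    have e3 : pb.bracket b (a * b) = -(b * u) := by
      rw [pb.leibniz_right, pb.alt, hban]; ring
    have e4 : pb.bracket a (pb.bracket b (a * b)) = -(b * pb.bracket a u) - u * u := by
      rw [e3, pb.bracket_neg_right, pb.leibniz_right, ← hudef]; ring
    have h6 := ddag2 (a * b)
    rw [e4] at h6
    have hN4 : (u * u) * (u * u) ∈ NS := by
      have hfin : (u * u) * (u * u)
          = -(u * u * (-(b * pb.bracket a u) - u * u)) - u * u * (b * pb.bracket a u) := by
        ring
      rw [hfin]
      exact Submodule.sub_mem _ (Submodule.neg_mem _ h6) (hNmul _ _ (hNmul b _ hauN))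
    exact hsq _ (hsq _ hN4)
  -- conclude by span induction
  intro x hx
  induction hx using Submodule.span_induction with
  | mem z hz => obtain ⟨a, ha, b, hb, rfl⟩ := hz; exact gen a ha b hb
  | zero => exact Submodule.zero_mem _
  | add x y _ _ hx hy => exact Submodule.add_mem _ hx hy
  | smul r x _ hx => exact Submodule.smul_mem _ r hx


/-- Each term of the derived series of `⊤` is a Lie ideal. -/
lemma dseries_ideal : ∀ n : ℕ, ∀ x ∈ pb.dseries ⊤ n, ∀ y : P,
    pb.bracket x y ∈ pb.dseries ⊤ n := by
  intro n
  induction n with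
  | zero => intro x _ y; exact Submodule.mem_top
  | succ n ih => exact pb.lieSpan_ideal ih

end PoissonBracket


open PoissonBracket in
theorem solvable_aux
    {F P : Type*} [Field F] [CommRing P] [Algebra F P]
    (h2 : (2:F) ≠ 0)
    (pb : PoissonBracket F P)
    (hsolv : ∃ n : ℕ, pb.dseries ⊤ n = ⊥) :
    ∀ x ∈ pb.lieSpan ⊤ ⊤ * (⊤ : Submodule F P), IsNilpotent x := by
  obtain ⟨n, hn⟩ := hsolv
  set NS : Submodule F P := (nilradical P).restrictScalars F with hNSdef
  -- downward induction
  have main : ∀ i : ℕ, ∀ k : ℕ, k + i = n + 1 → 1 ≤ k → pb.dseries ⊤ k ≤ NS := by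
    intro i
    induction i with
    | zero =>
        intro k hk _
        have hk' : k = n + 1 := by omega
        subst hk'
        have : pb.dseries ⊤ (n + 1) = pb.lieSpan (⊥ : Submodule F P) ⊥ := by
          show pb.lieSpan (pb.dseries ⊤ n) (pb.dseries ⊤ n) = _
          rw [hn]
        rw [this]
        refine Submodule.span_le.mpr ?_
        rintro z ⟨a, ha, b, hb, rfl⟩
        simp only [Submodule.mem_bot] at ha hb
        subst ha; subst hb
        rw [pb.bracket_zero_left]
        exact Submodule.zero_mem _
    | succ i ih =>
        intro k hk hk1
        obtain ⟨k', rfl⟩ : ∃ k', k = k' + 1 := ⟨k - 1, by omega⟩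
        have hnext : pb.dseries ⊤ (k' + 2) ≤ NS := ih (k' + 2) (by omega) (by omega)
        intro x hx
        refine pb.key h2 (pb.dseries ⊤ k') (pb.dseries_ideal k') ?_ x hx
        intro u hu v hv
        exact hnext (pb.mem_lieSpan_of hu hv)
  have h1 : pb.dseries ⊤ 1 ≤ NS := main n 1 (by omega) le_rfl
  have hmul : pb.lieSpan ⊤ ⊤ * (⊤ : Submodule F P) ≤ NS := by
    rw [Submodule.mul_le]
    intro a ha q _
    have haN : a ∈ NS := h1 ha
    rw [hNSdef, Submodule.restrictScalars_mem] at haN ⊢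
    exact Ideal.mul_mem_right q _ haN
  intro x hx
  exact mem_nilradical.mp ((Submodule.restrictScalars_mem F _ x).mp (hmul hx))

/-- Over a field of characteristic `p ≠ 2` (possibly `0`), if `P` is solvable as a
Lie algebra then the Poisson ideal `{P,P}·P` is nil. -/
theorem solvable_lieSpan_mul_top_isNil
    {F P : Type*} [Field F] [CommRing P] [Algebra F P]
    (p : ℕ) [CharP F p] (hp : p ≠ 2)
    (pb : PoissonBracket F P)
    (hsolv : ∃ n : ℕ, pb.dseries ⊤ n = ⊥) :
    ∀ x ∈ pb.lieSpan ⊤ ⊤ * (⊤ : Submodule F P), IsNilpotent x := by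
  have h2 : (2 : F) ≠ 0 := by
    intro h
    have hdvd : p ∣ 2 := (CharP.cast_eq_zero_iff F p 2).mp h
    rcases CharP.char_is_prime_or_zero F p with hpr | h0
    · exact hp ((Nat.prime_dvd_prime_iff_eq hpr Nat.prime_two).mp hdvd)
    · subst h0
      exact (by norm_num : ¬ (0:ℕ) ∣ 2) hdvd
  exact solvable_aux h2 pb hsolv
end

section
/- Let P be a reduced Poisson algebra over a field 𝔽 of characteristic not equal to 2 (P has no nonzero nilpotent elements). Then P is solvable as a Lie algebra if and only if P is abelian, i.e. {P,P} = 0. -/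
open PoissonBracket

section Aux

namespace PoissonBracket

variable {F P : Type*} [Field F] [CommRing P] [Algebra F P]

lemma bracket_skew (pb : PoissonBracket F P) (a b : P) :
    pb.bracket a b = -pb.bracket b a := by
  have h := pb.alt (a + b)
  rw [pb.add_left, pb.add_right, pb.add_right] at h
  simp only [pb.alt] at h
  linear_combination h

lemma bracket_zero_left_s12 (pb : PoissonBracket F P) (x : P) :
    pb.bracket 0 x = 0 := by
  have h := pb.smul_left (0 : F) 0 x
  simpa using h

lemma leibniz_right_s12 (pb : PoissonBracket F P) (c a b : P) :
    pb.bracket c (a * b) = a * pb.bracket c b + b * pb.bracket c a := by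
  rw [bracket_skew pb c (a * b), pb.leibniz, bracket_skew pb b c, bracket_skew pb a c]
  ring

/-- If `K` is a Lie ideal, so is `{K, K}`. -/
lemma lieSpan_lieIdeal (pb : PoissonBracket F P) (K : Submodule F P)
    (hK : ∀ a ∈ K, ∀ x : P, pb.bracket a x ∈ K) :
    ∀ u ∈ pb.lieSpan K K, ∀ x : P, pb.bracket u x ∈ pb.lieSpan K K := by
  intro u hu
  induction hu using Submodule.span_induction with
  | mem z hz =>
    obtain ⟨a, ha, b, hb, rfl⟩ := hz
    intro x
    have hj : pb.bracket (pb.bracket a b) x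
        = -pb.bracket (pb.bracket b x) a - pb.bracket (pb.bracket x a) b := by
      linear_combination pb.jacobi a b x
    have hxa : pb.bracket x a ∈ K := by
      rw [bracket_skew pb x a]; exact K.neg_mem (hK a ha x)
    rw [hj]
    exact sub_mem (neg_mem (Submodule.subset_span ⟨_, hK b hb x, a, ha, rfl⟩))
      (Submodule.subset_span ⟨_, hxa, b, hb, rfl⟩)
  | zero => intro x; rw [bracket_zero_left_s12]; exact zero_mem _
  | add u v hu hv ihu ihv => intro x; rw [pb.add_left]; exact add_mem (ihu x) (ihv x)
  | smul r u hu ihu => intro x; rw [pb.smul_left]; exact Submodule.smul_mem _ _ (ihu x)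

/-- Key step: if `K` is a Lie ideal and all brackets between elements of
`{K,K}` vanish, then (in a reduced algebra with `1/2`) `{K,K} = 0`. -/
lemma key_step (pb : PoissonBracket F P) [IsReduced P]
    (htwo : ∀ x : P, x + x = 0 → x = 0)
    (K : Submodule F P) (hK : ∀ a ∈ K, ∀ x : P, pb.bracket a x ∈ K)
    (hz : ∀ u ∈ pb.lieSpan K K, ∀ v ∈ pb.lieSpan K K, pb.bracket u v = 0) :
    pb.lieSpan K K = ⊥ := by
  have hI : ∀ u ∈ pb.lieSpan K K, ∀ x : P, pb.bracket u x ∈ pb.lieSpan K K :=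
    lieSpan_lieIdeal pb K hK
  have hgen : ∀ a ∈ K, ∀ b ∈ K, pb.bracket a b ∈ pb.lieSpan K K := by
    intro a ha b hb
    exact Submodule.subset_span ⟨a, ha, b, hb, rfl⟩
  -- Step A : every element of {K,K} is Poisson central.
  have hcent : ∀ u ∈ pb.lieSpan K K, ∀ x : P, pb.bracket u x = 0 := by
    intro u hu x
    have hD2 : ∀ y : P, pb.bracket u (pb.bracket u y) = 0 :=
      fun y => hz u hu _ (hI u hu y)
    have e1 : pb.bracket u (x * x) = x * pb.bracket u x + x * pb.bracket u x :=
      leibniz_right_s12 pb u x x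
    have e2 : pb.bracket u (pb.bracket u (x * x)) = 0 := hD2 _
    rw [e1, pb.add_right, leibniz_right_s12 pb u x (pb.bracket u x), hD2 x] at e2
    have hsq : pb.bracket u x * pb.bracket u x = 0 := htwo _ (by linear_combination e2)
    exact IsNilpotent.eq_zero ⟨2, by rwa [pow_two]⟩
  have hcent' : ∀ u ∈ pb.lieSpan K K, ∀ x : P, pb.bracket x u = 0 := by
    intro u hu x
    rw [bracket_skew pb x u, hcent u hu x, neg_zero]
  -- Step B : every generator {a,b} (a,b ∈ K) is zero.
  rw [lieSpan, Submodule.span_eq_bot]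
  rintro z ⟨a, ha, b, hb, rfl⟩
  have hhI : pb.bracket a b ∈ pb.lieSpan K K := hgen a ha b hb
  have hbz : ∀ z : P, pb.bracket b z ∈ K := hK b hb
  have hEG : ∀ z : P, pb.bracket a (pb.bracket b z) ∈ pb.lieSpan K K :=
    fun z => hgen a ha _ (hbz z)
  have claim1 : ∀ z : P,
      pb.bracket a b * pb.bracket a (pb.bracket b z) = 0 := by
    intro z
    have e1 : pb.bracket b (b * z) = b * pb.bracket b z := by
      rw [leibniz_right_s12 pb b b z, pb.alt]; ring
    have e3 : pb.bracket a (pb.bracket a (pb.bracket b (b * z))) = 0 :=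
      hcent' _ (hgen a ha _ (hbz (b * z))) a
    have e2 : pb.bracket a (pb.bracket b (b * z))
        = b * pb.bracket a (pb.bracket b z) + pb.bracket b z * pb.bracket a b := by
      rw [e1, leibniz_right_s12 pb a b (pb.bracket b z)]
    have hx1 : pb.bracket a (pb.bracket a (pb.bracket b z)) = 0 :=
      hcent' _ (hEG z) a
    have hx2 : pb.bracket a (pb.bracket a b) = 0 := hcent' _ hhI a
    rw [e2, pb.add_right, leibniz_right_s12 pb a b (pb.bracket a (pb.bracket b z)),
      leibniz_right_s12 pb a (pb.bracket b z) (pb.bracket a b), hx1, hx2] at e3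
    exact htwo _ (by linear_combination e3)
  -- evaluate claim1 at z = a * b to get the cube identity
  have e5 : pb.bracket b (a * b) = b * pb.bracket b a := by
    rw [leibniz_right_s12 pb b a b, pb.alt]; ring
  have e6 : pb.bracket a (pb.bracket b (a * b))
      = b * pb.bracket a (pb.bracket b a) + pb.bracket b a * pb.bracket a b := by
    rw [e5, leibniz_right_s12 pb a b (pb.bracket b a)]
  have e7 : pb.bracket a (pb.bracket b a) = 0 := hcent' _ (hgen b hb a ha) a
  have e8 : pb.bracket b a = -pb.bracket a b := bracket_skew pb b a
  have final := claim1 (a * b)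
  rw [e6, e7, e8] at final
  have hcube : pb.bracket a b * pb.bracket a b * pb.bracket a b = 0 := by
    linear_combination -final
  exact IsNilpotent.eq_zero ⟨3, by rwa [pow_succ, pow_two]⟩

lemma dseries_lieIdeal (pb : PoissonBracket F P) :
    ∀ k : ℕ, ∀ a ∈ pb.dseries ⊤ k, ∀ x : P, pb.bracket a x ∈ pb.dseries ⊤ k := by
  intro k
  induction k with
  | zero => intro a _ x; trivial
  | succ k ih => exact lieSpan_lieIdeal pb (pb.dseries ⊤ k) ih

end PoissonBracket

end Aux

/-- Over a field of characteristic `≠ 2`, a reduced Poisson algebra is solvable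
as a Lie algebra iff it is abelian. -/
theorem reduced_solvable_iff_abelian
    {F P : Type*} [Field F] [CommRing P] [Algebra F P] [IsReduced P]
    (p : ℕ) [CharP F p] (hp : p ≠ 2)
    (pb : PoissonBracket F P) :
    (∃ n : ℕ, pb.dseries ⊤ n = ⊥) ↔ ∀ x y : P, pb.bracket x y = 0 := by
  have h2F : (2 : F) ≠ 0 := by
    intro h2
    have h2' : ((2 : ℕ) : F) = 0 := by exact_mod_cast h2
    have hdvd : p ∣ 2 := (CharP.cast_eq_zero_iff F p 2).mp h2'
    rcases Nat.prime_two.eq_one_or_self_of_dvd p hdvd with h1 | h1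
    · exact CharP.char_ne_one F p h1
    · exact hp h1
  have htwo : ∀ x : P, x + x = 0 → x = 0 := by
    intro x hx
    have h2x : (2 : F) • x = 0 := by rw [two_smul]; exact hx
    have := congrArg (fun y => (2 : F)⁻¹ • y) h2x
    simpa [smul_smul, inv_mul_cancel₀ h2F] using this
  constructor
  · rintro ⟨n, hn⟩ x y
    have hdown : ∀ m : ℕ, pb.dseries ⊤ (m + 1) = ⊥ → pb.dseries ⊤ 1 = ⊥ := by
      intro m
      induction m with
      | zero => exact id
      | succ m ih =>
        intro h
        apply ih
        have hstep : pb.dseries ⊤ (m + 1) = ⊥ := by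
          have : pb.dseries ⊤ (m + 1)
              = pb.lieSpan (pb.dseries ⊤ m) (pb.dseries ⊤ m) := rfl
          rw [this]
          apply PoissonBracket.key_step pb htwo (pb.dseries ⊤ m)
            (pb.dseries_lieIdeal m)
          intro u hu v hv
          have hmem : pb.bracket u v ∈ pb.dseries ⊤ (m + 2) :=
            Submodule.subset_span ⟨u, hu, v, hv, rfl⟩
          rw [h] at hmem
          simpa using hmem
        exact hstep
    cases n with
    | zero =>
      have hx : x = 0 := by
        have hmem : x ∈ pb.dseries ⊤ 0 := trivial
        rw [hn] at hmem
        simpa using hmem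
      rw [hx, PoissonBracket.bracket_zero_left_s12]
    | succ n =>
      have h1 := hdown n hn
      have hmem : pb.bracket x y ∈ pb.dseries ⊤ 1 :=
        Submodule.subset_span ⟨x, trivial, y, trivial, rfl⟩
      rw [h1] at hmem
      simpa using hmem
  · intro hab
    refine ⟨1, ?_⟩
    show pb.lieSpan ⊤ ⊤ = ⊥
    rw [PoissonBracket.lieSpan, Submodule.span_eq_bot]
    rintro z ⟨a, -, b, -, rfl⟩
    exact hab a b
end
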